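/- arXiv:2401.16480 — 2 statements merged into one kernel-verified Lean document; each statement's English description precedes it below -/
import Mathlib

section
/- For every M ≥ 2, if γ_m ≠ 0 for every edge m (the couplings J_m arbitrary, possibly non-uniform), then the kernel of H_γ + H_J restricted to the two-fermion sector W₂^↑ has dimension at least 2^{M−1}; i.e. the Q = 2 sector of the extended quantum breakdown model possesses exponentially many exact zero modes for every system size M. -/
open scoped BigOperators

namespace QuantumBreakdown

/-- Basis index: pairs of an occupation configuration and a spin configuration. -/
abbrev Cfg (M : ℕ) := (Fin M → Bool) × (Fin M → Bool)

/-- The Hilbert space `V_M`. -/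
abbrev V (M : ℕ) := Cfg M → ℂ

/-- The basis vector `e_{n,s}`. -/
noncomputable def e (M : ℕ) (p : Cfg M) : V M := Pi.single p 1

/-- The linear operator determined by prescribed images of the basis vectors. -/
noncomputable def mkOp (M : ℕ) (f : Cfg M → V M) : V M →ₗ[ℂ] V M :=
  (Pi.basisFun ℂ (Cfg M)).constr ℂ f

/-- The left site of edge `m`. -/
def sL (M : ℕ) (m : Fin (M - 1)) : Fin M := ⟨m.1, by have := m.2; omega⟩

/-- The right site of edge `m`. -/
def sR (M : ℕ) (m : Fin (M - 1)) : Fin M := ⟨m.1 + 1, by have := m.2; omega⟩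

/-- Move a fermion from site `a` to site `b`. -/
def hop (M : ℕ) (n : Fin M → Bool) (a b : Fin M) : Fin M → Bool :=
  Function.update (Function.update n a false) b true

/-- The hopping term `H_γ`. -/
noncomputable def Hgam (M : ℕ) (γ : Fin (M - 1) → ℝ) : V M →ₗ[ℂ] V M :=
  mkOp M fun p =>
    -∑ m : Fin (M - 1), (γ m : ℂ) •
      ((if p.1 (sL M m) = true ∧ p.1 (sR M m) = false then
          e M (hop M p.1 (sL M m) (sR M m), p.2) else 0)
        +
       (if p.1 (sR M m) = true ∧ p.1 (sL M m) = false then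
          e M (hop M p.1 (sR M m) (sL M m), p.2) else 0))

/-- The breakdown interaction `H_J`. -/
noncomputable def HJop (M : ℕ) (J : Fin (M - 1) → ℝ) : V M →ₗ[ℂ] V M :=
  mkOp M fun p =>
    ∑ m : Fin (M - 1), (J m : ℂ) •
      ((if p.1 (sL M m) = true ∧ p.1 (sR M m) = false ∧ p.2 (sR M m) = false then
          e M (hop M p.1 (sL M m) (sR M m), Function.update p.2 (sR M m) true) else 0)
        +
       (if p.1 (sR M m) = true ∧ p.1 (sL M m) = false ∧ p.2 (sR M m) = true then
          e M (hop M p.1 (sR M m) (sL M m), Function.update p.2 (sR M m) false) else 0))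

/-- The on-site potential `H_μ`. -/
noncomputable def Hmu (M : ℕ) (μ : Fin M → ℝ) : V M →ₗ[ℂ] V M :=
  mkOp M fun p => (∑ m : Fin M, if p.1 m = true then (μ m : ℂ) else 0) • e M p

/-- Pauli `σ^x` at site `m`. -/
noncomputable def sigx (M : ℕ) (m : Fin M) : V M →ₗ[ℂ] V M :=
  mkOp M fun p => e M (p.1, Function.update p.2 m (!p.2 m))

/-- Pauli `σ^y` at site `m`. -/
noncomputable def sigy (M : ℕ) (m : Fin M) : V M →ₗ[ℂ] V M :=
  mkOp M fun p =>
    (if p.2 m = true then Complex.I else -Complex.I) • e M (p.1, Function.update p.2 m (!p.2 m))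

/-- Pauli `σ^z` at site `m`. -/
noncomputable def sigz (M : ℕ) (m : Fin M) : V M →ₗ[ℂ] V M :=
  mkOp M fun p => (if p.2 m = true then (1 : ℂ) else -1) • e M p

/-- The magnetic field term `H_h`. -/
noncomputable def Hh (M : ℕ) (hx hy hz : Fin M → ℝ) : V M →ₗ[ℂ] V M :=
  ∑ m : Fin M, ((hx m : ℂ) • sigx M m + (hy m : ℂ) • sigy M m + (hz m : ℂ) • sigz M m)

/-- Number of occupied sites of an occupation configuration. -/
def nOcc (M : ℕ) (n : Fin M → Bool) : ℕ := (Finset.univ.filter fun m => n m = true).card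

/-- The number operator `N`. -/
noncomputable def numOp (M : ℕ) : V M →ₗ[ℂ] V M :=
  mkOp M fun p => (nOcc M p.1 : ℂ) • e M p

/-- The charge-`Q` sector `W_Q`. -/
noncomputable def sector (M Q : ℕ) : Submodule ℂ (V M) :=
  Submodule.span ℂ { v | ∃ p : Cfg M, nOcc M p.1 = Q ∧ v = e M p }

/-- The charge-`Q` sector with first spin up, `W_Q^↑`. -/
noncomputable def sectorUp (M : ℕ) (hM : 0 < M) (Q : ℕ) : Submodule ℂ (V M) :=
  Submodule.span ℂ { v | ∃ p : Cfg M, nOcc M p.1 = Q ∧ p.2 ⟨0, hM⟩ = true ∧ v = e M p }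

end QuantumBreakdown

open QuantumBreakdown

namespace ZM

variable (M : ℕ)

/-- Occupation configuration with a fermion pair at sites `k, k+1`. -/
def pocc (k : ℕ) : Fin M → Bool := fun i => decide (i.1 = k ∨ i.1 = k + 1)

/-- Occupation configuration with fermions at sites `k, k+2`. -/
def gocc (k : ℕ) : Fin M → Bool := fun i => decide (i.1 = k ∨ i.1 = k + 2)

/-- Spin configuration with spin up at site `0` and `s` on the rest. -/
def sp (s : Fin (M - 1) → Bool) : Fin M → Bool :=
  fun i => if h : i.1 = 0 then true else s ⟨i.1 - 1, by have := i.2; omega⟩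

/-- Index type for adjacent-pair configurations with first spin up. -/
abbrev TI := Fin (M - 1) × (Fin (M - 1) → Bool)

/-- Index type for gap configurations with first spin up. -/
abbrev GI := Fin (M - 2) × (Fin (M - 1) → Bool)

def emb (x : TI M) : Cfg M := (pocc M x.1.1, sp M x.2)
def gemb (x : GI M) : Cfg M := (gocc M x.1.1, sp M x.2)

/-- The property of being a gap configuration with first spin up. -/
def IsG (q : Cfg M) : Prop := ∃ j s, j + 2 < M ∧ q = (gocc M j, sp M s)

lemma sp_zero (hM : 0 < M) (s : Fin (M-1) → Bool) : sp M s ⟨0, hM⟩ = true := by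
  simp [sp]

lemma sp_exists (hM : 0 < M) (t : Fin M → Bool) (ht : t ⟨0, hM⟩ = true) :
    ∃ s, t = sp M s := by
  refine ⟨fun j => t ⟨j.1 + 1, by have := j.2; omega⟩, ?_⟩
  funext i
  by_cases h : i.1 = 0
  · have : i = ⟨0, hM⟩ := by ext; exact h
    simp [sp, h, this, ht]
  · simp only [sp, dif_neg h]
    congr 1
    ext
    simp
    omega

lemma mkOp_e (f : Cfg M → V M) (p : Cfg M) : mkOp M f (e M p) = f p := by
  have h : e M p = Pi.basisFun ℂ (Cfg M) p := by
    simp [e]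
  rw [mkOp, h, Module.Basis.constr_basis]

lemma e_apply_ne (p q : Cfg M) (h : q ≠ p) : e M p q = 0 :=
  Pi.single_eq_of_ne h 1

/-- left-to-right hop on a pair configuration yields a gap configuration. -/
lemma hopLR (k m : Fin (M - 1)) (h1 : pocc M k.1 (sL M m) = true)
    (h2 : pocc M k.1 (sR M m) = false) :
    hop M (pocc M k.1) (sL M m) (sR M m) = gocc M k.1 ∧ k.1 + 2 < M := by
  have hm := m.2
  have hk := k.2
  simp only [pocc, sL, sR, decide_eq_true_eq, decide_eq_false_iff_not] at h1 h2
  replace h1 := of_decide_eq_true h1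
  replace h2 := of_decide_eq_false h2
  have hmk : m.1 = k.1 + 1 := by omega
  constructor
  · funext i
    rcases i with ⟨iv, hi⟩
    simp only [hop, Function.update_apply, gocc]
    by_cases hb : (⟨iv, hi⟩ : Fin M) = sR M m
    · rw [if_pos hb]
      simp only [Fin.ext_iff, sL, sR] at hb
      rw [eq_comm]
      simp only [decide_eq_true_eq]
      omega
    · rw [if_neg hb]
      simp only [Fin.ext_iff, sL, sR] at hb
      by_cases ha : (⟨iv, hi⟩ : Fin M) = sL M m
      · rw [if_pos ha]
        simp only [Fin.ext_iff, sL, sR] at ha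
        rw [eq_comm]
        simp only [decide_eq_false_iff_not]
        omega
      · rw [if_neg ha]
        simp only [Fin.ext_iff, sL, sR] at ha
        simp only [pocc, decide_eq_decide]
        omega
  · omega

/-- right-to-left hop on a pair configuration yields a gap configuration. -/
lemma hopRL (k m : Fin (M - 1)) (h1 : pocc M k.1 (sR M m) = true)
    (h2 : pocc M k.1 (sL M m) = false) :
    hop M (pocc M k.1) (sR M m) (sL M m) = gocc M m.1 ∧ m.1 + 2 < M := by
  have hm := m.2
  have hk := k.2
  simp only [pocc, sL, sR, decide_eq_true_eq, decide_eq_false_iff_not] at h1 h2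
  replace h1 := of_decide_eq_true h1
  replace h2 := of_decide_eq_false h2
  have hmk : m.1 + 1 = k.1 := by omega
  constructor
  · funext i
    rcases i with ⟨iv, hi⟩
    simp only [hop, Function.update_apply, gocc]
    by_cases hb : (⟨iv, hi⟩ : Fin M) = sL M m
    · rw [if_pos hb]
      simp only [Fin.ext_iff, sL, sR] at hb
      rw [eq_comm]
      simp only [decide_eq_true_eq]
      omega
    · rw [if_neg hb]
      simp only [Fin.ext_iff, sL, sR] at hb
      by_cases ha : (⟨iv, hi⟩ : Fin M) = sR M m
      · rw [if_pos ha]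
        simp only [Fin.ext_iff, sL, sR] at ha
        rw [eq_comm]
        simp only [decide_eq_false_iff_not]
        omega
      · rw [if_neg ha]
        simp only [Fin.ext_iff, sL, sR] at ha
        simp only [pocc, decide_eq_decide]
        omega
  · omega

lemma sR_ne_zero (hM : 0 < M) (m : Fin (M - 1)) : (⟨0, hM⟩ : Fin M) ≠ sR M m := by
  simp [sR, Fin.ext_iff]

/-- The key support lemma: the Hamiltonian applied to a pair basis state is
supported on gap configurations with first spin up. -/
lemma supp (hM : 2 ≤ M) (γ J : Fin (M - 1) → ℝ) (x : TI M) (q : Cfg M)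
    (hq : ¬ IsG M q) : ((Hgam M γ + HJop M J) (e M (emb M x))) q = 0 := by
  have h0 : (0:ℕ) < M := by omega
  obtain ⟨k, s⟩ := x
  -- a helper to kill each basis-vector evaluation
  have key : ∀ (n' : Fin M → Bool) (t' : Fin M → Bool),
      (∃ j, j + 2 < M ∧ n' = gocc M j) → t' ⟨0, h0⟩ = true → e M (n', t') q = 0 := by
    rintro n' t' ⟨j, hj, rfl⟩ ht'
    obtain ⟨s', rfl⟩ := sp_exists M h0 t' ht'
    exact e_apply_ne M _ _ (fun hqe => hq ⟨j, s', hj, hqe⟩)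
  simp only [LinearMap.add_apply, Hgam, HJop, mkOp_e, emb]
  rw [Pi.add_apply, Pi.neg_apply, Finset.sum_apply, Finset.sum_apply]
  have hz0 : sp M s ⟨0, h0⟩ = true := sp_zero M h0 s
  have hterm1 : ∀ m ∈ Finset.univ, ((γ m : ℂ) •
      ((if pocc M k.1 (sL M m) = true ∧ pocc M k.1 (sR M m) = false then
          e M (hop M (pocc M k.1) (sL M m) (sR M m), sp M s) else 0)
        +
       (if pocc M k.1 (sR M m) = true ∧ pocc M k.1 (sL M m) = false then
          e M (hop M (pocc M k.1) (sR M m) (sL M m), sp M s) else 0))) q = 0 := by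
    intro m _
    rw [Pi.smul_apply, Pi.add_apply]
    have hA : (if pocc M k.1 (sL M m) = true ∧ pocc M k.1 (sR M m) = false then
          e M (hop M (pocc M k.1) (sL M m) (sR M m), sp M s) else 0) q = 0 := by
      split_ifs with h
      · exact key _ _ ⟨k.1, (hopLR M k m h.1 h.2).2, (hopLR M k m h.1 h.2).1⟩ hz0
      · rfl
    have hB : (if pocc M k.1 (sR M m) = true ∧ pocc M k.1 (sL M m) = false then
          e M (hop M (pocc M k.1) (sR M m) (sL M m), sp M s) else 0) q = 0 := by
      split_ifs with h
      · exact key _ _ ⟨m.1, (hopRL M k m h.1 h.2).2, (hopRL M k m h.1 h.2).1⟩ hz0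
      · rfl
    rw [hA, hB, add_zero, smul_zero]
  have hterm2 : ∀ m ∈ Finset.univ, ((J m : ℂ) •
      ((if pocc M k.1 (sL M m) = true ∧ pocc M k.1 (sR M m) = false ∧ sp M s (sR M m) = false then
          e M (hop M (pocc M k.1) (sL M m) (sR M m), Function.update (sp M s) (sR M m) true) else 0)
        +
       (if pocc M k.1 (sR M m) = true ∧ pocc M k.1 (sL M m) = false ∧ sp M s (sR M m) = true then
          e M (hop M (pocc M k.1) (sR M m) (sL M m), Function.update (sp M s) (sR M m) false) else 0))) q = 0 := by
    intro m _
    rw [Pi.smul_apply, Pi.add_apply]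
    have hupd : ∀ b : Bool, Function.update (sp M s) (sR M m) b ⟨0, h0⟩ = true := by
      intro b
      rw [Function.update_of_ne (sR_ne_zero M h0 m)]
      exact hz0
    have hA : (if pocc M k.1 (sL M m) = true ∧ pocc M k.1 (sR M m) = false ∧ sp M s (sR M m) = false then
          e M (hop M (pocc M k.1) (sL M m) (sR M m), Function.update (sp M s) (sR M m) true) else 0) q = 0 := by
      split_ifs with h
      · exact key _ _ ⟨k.1, (hopLR M k m h.1 h.2.1).2, (hopLR M k m h.1 h.2.1).1⟩ (hupd true)
      · rfl
    have hB : (if pocc M k.1 (sR M m) = true ∧ pocc M k.1 (sL M m) = false ∧ sp M s (sR M m) = true then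
          e M (hop M (pocc M k.1) (sR M m) (sL M m), Function.update (sp M s) (sR M m) false) else 0) q = 0 := by
      split_ifs with h
      · exact key _ _ ⟨m.1, (hopRL M k m h.1 h.2.1).2, (hopRL M k m h.1 h.2.1).1⟩ (hupd false)
      · rfl
    rw [hA, hB, add_zero, smul_zero]
  rw [Finset.sum_eq_zero hterm1, Finset.sum_eq_zero hterm2, neg_zero, add_zero]

/-- A pair configuration has two occupied sites. -/
lemma nOcc_pocc (k : Fin (M - 1)) : nOcc M (pocc M k.1) = 2 := by
  have hk := k.2
  have ha : (k.1 : ℕ) < M := by omega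
  have hb : (k.1 + 1 : ℕ) < M := by omega
  have : (Finset.univ.filter fun i => pocc M k.1 i = true) =
      {(⟨k.1, ha⟩ : Fin M), ⟨k.1 + 1, hb⟩} := by
    ext i
    simp only [Finset.mem_filter, Finset.mem_univ, true_and, pocc, decide_eq_true_eq,
      Finset.mem_insert, Finset.mem_singleton, Fin.ext_iff]
    try omega
  rw [nOcc, this]
  rw [Finset.card_insert_of_notMem (by simp [Fin.ext_iff]), Finset.card_singleton]

/-- The inclusion of pair-configuration coefficient space into `V M`. -/
noncomputable def iot : (TI M → ℂ) →ₗ[ℂ] V M :=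
  ∑ x : TI M, (LinearMap.proj x).smulRight (e M (emb M x))

lemma iot_apply (c : TI M → ℂ) : iot M c = ∑ x : TI M, c x • e M (emb M x) := by
  simp [iot, LinearMap.sum_apply]

lemma emb_inj : Function.Injective (emb M) := by
  rintro ⟨k, s⟩ ⟨k', s'⟩ h
  have hk := k.2
  have hk' := k'.2
  obtain ⟨h1, h2⟩ := Prod.mk.injEq .. ▸ h
  replace h1 : k = k' := by
    have e1 := congrFun h1 ⟨k.1, by omega⟩
    have e2 := congrFun h1 ⟨k'.1, by omega⟩
    simp only [pocc, decide_eq_decide, eq_self_iff_true, true_or, true_iff, iff_true] at e1 e2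
    ext
    omega
  replace h2 : s = s' := by
    funext j
    have := congrFun h2 ⟨j.1 + 1, by have := j.2; omega⟩
    simpa [sp] using this
  rw [h1, h2]

lemma iot_apply_emb (c : TI M → ℂ) (x : TI M) : iot M c (emb M x) = c x := by
  rw [iot_apply, Finset.sum_apply]
  have : ∀ y ∈ Finset.univ, y ≠ x → (c y • e M (emb M y)) (emb M x) = 0 := by
    intro y _ hy
    rw [Pi.smul_apply, e_apply_ne M _ _ (fun h => hy (emb_inj M h).symm), smul_zero]
  rw [Finset.sum_eq_single x this (by simp)]
  simp [e, Pi.single_eq_same]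

lemma iot_inj : Function.Injective (iot M) := by
  intro c c' h
  funext x
  have := congrFun h (emb M x)
  rwa [iot_apply_emb, iot_apply_emb] at this

end ZM

open ZM

/-- for every `M ≥ 2` and nonvanishing hoppings `γ_m ≠ 0`
(`J` arbitrary, possibly non-uniform), the kernel of `H_γ + H_J` restricted to
the two-fermion sector `W₂^↑` has dimension at least `2^{M−1}`: exponentially
many exact zero modes in the `Q = 2` sector for every system size. -/
theorem zero_modes_Q2 (M : ℕ) (hM : 2 ≤ M)
    (γ J : Fin (M - 1) → ℝ) (hγ : ∀ m, γ m ≠ 0) :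
    2 ^ (M - 1) ≤ Module.finrank ℂ
      ↥(sectorUp M (by omega) 2 ⊓ LinearMap.ker (Hgam M γ + HJop M J)) := by
  have h0 : (0:ℕ) < M := by omega
  set H := Hgam M γ + HJop M J with hH
  set g := (LinearMap.funLeft ℂ ℂ (gemb M)) ∘ₗ H ∘ₗ iot M with hg
  -- membership of iot of kernel elements
  have hmem : ∀ c ∈ LinearMap.ker g,
      iot M c ∈ sectorUp M (by omega) 2 ⊓ LinearMap.ker H := by
    intro c hc
    constructor
    · rw [iot_apply]
      refine Submodule.sum_mem _ fun x _ => Submodule.smul_mem _ _ ?_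
      exact Submodule.subset_span ⟨emb M x, nOcc_pocc M x.1, sp_zero M h0 x.2, rfl⟩
    · simp only [SetLike.mem_coe, LinearMap.mem_ker]
      funext q
      by_cases hq : IsG M q
      · obtain ⟨j, s, hj, rfl⟩ := hq
        have : H (iot M c) (gemb M (⟨j, by omega⟩, s)) = g c (⟨j, by omega⟩, s) := rfl
        rw [show ((gocc M j, sp M s) : Cfg M) = gemb M (⟨j, by omega⟩, s) from rfl, this,
          LinearMap.mem_ker.mp hc]
        rfl
      · rw [iot_apply, map_sum, Finset.sum_apply]
        refine Finset.sum_eq_zero fun x _ => ?_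
        rw [map_smul, Pi.smul_apply, supp M hM γ J x q hq, smul_zero]
  -- rank-nullity bound
  have hcard : Module.finrank ℂ (TI M → ℂ) = (M - 1) * 2 ^ (M - 1) := by
    rw [Module.finrank_fintype_fun_eq_card]
    simp [Fintype.card_fun]
  have hrn := LinearMap.finrank_range_add_finrank_ker g
  have hrange : Module.finrank ℂ (LinearMap.range g) ≤ (M - 2) * 2 ^ (M - 1) := by
    calc Module.finrank ℂ (LinearMap.range g) ≤ Module.finrank ℂ (GI M → ℂ) :=
          Submodule.finrank_le _
      _ = (M - 2) * 2 ^ (M - 1) := by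
          rw [Module.finrank_fintype_fun_eq_card]
          simp [Fintype.card_fun]
  have hker : 2 ^ (M - 1) ≤ Module.finrank ℂ (LinearMap.ker g) := by
    rw [hcard] at hrn
    have harith : (M - 1) * 2 ^ (M - 1) = (M - 2) * 2 ^ (M - 1) + 2 ^ (M - 1) := by
      have : M - 1 = (M - 2) + 1 := by omega
      rw [this, add_mul, one_mul]
    omega
  -- inject the kernel into the target
  refine le_trans hker ?_
  have hfin : Module.Finite ℂ
      ↥(sectorUp M (by omega) 2 ⊓ LinearMap.ker H) := by infer_instance
  refine LinearMap.finrank_le_finrank_of_injective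
    (f := LinearMap.codRestrict _ ((iot M) ∘ₗ (LinearMap.ker g).subtype)
      (fun c => hmem c.1 c.2)) ?_
  intro a b hab
  have : iot M a.1 = iot M b.1 := congrArg Subtype.val hab
  exact Subtype.ext (iot_inj M this)
end

section
/- Let 1 ≤ Q ≤ M and suppose M is odd or Q is even (i.e. exclude only the case of even M with odd Q). If γ_m ≠ 0 for every edge m (the couplings J_m arbitrary), then the kernel of H_γ + H_J restricted to W_Q^↑ has dimension at least 2^{M−1}; i.e. every such charge sector of the extended quantum breakdown model possesses at least 2^{M−1} exact zero modes. -/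
open scoped BigOperators

open QuantumBreakdown


namespace ZMAux

/-! ### Basic lemmas about `mkOp`, `e`, and spans of basis vectors -/

lemma mkOp_apply {M : ℕ} (f : Cfg M → V M) (p : Cfg M) : mkOp M f (e M p) = f p := by
  have he : e M p = Pi.basisFun ℂ (Cfg M) p := (Pi.basisFun_apply ℂ (Cfg M) p).symm
  rw [mkOp, he, Module.Basis.constr_basis]

lemma e_injective {M : ℕ} : Function.Injective (e M) := by
  intro p q h
  by_contra hne
  have := congrFun h p
  rw [e, e, Pi.single_eq_same, Pi.single_eq_of_ne (show p ≠ q from hne)] at this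
  exact one_ne_zero this

lemma li_e {M : ℕ} : LinearIndependent ℂ (e M) := by
  have h : e M = ⇑(Pi.basisFun ℂ (Cfg M)) := by
    funext p; exact (Pi.basisFun_apply ℂ (Cfg M) p).symm
  rw [h]
  exact (Pi.basisFun ℂ (Cfg M)).linearIndependent

lemma finrank_span_image {M : ℕ} (s : Finset (Cfg M)) :
    Module.finrank ℂ ↥(Submodule.span ℂ ((s.image (e M) : Finset (V M)) : Set (V M)))
      = s.card := by
  classical
  have hsub : ((s.image (e M) : Finset (V M)) : Set (V M)) ⊆ Set.range (e M) := by
    intro v hv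
    rcases Finset.mem_image.mp (Finset.mem_coe.mp hv) with ⟨p, _, rfl⟩
    exact ⟨p, rfl⟩
  have hli : LinearIndependent ℂ ((↑) : ((s.image (e M) : Finset (V M)) : Set (V M)) → V M) :=
    ((linearIndepOn_id_range_iff e_injective).mpr li_e).mono hsub
  rw [finrank_span_set_eq_card hli, Finset.toFinset_coe]
  exact Finset.card_image_of_injective s e_injective

/-! ### Weight, occupation number, and hops -/

/-- The weight of an occupation configuration: sum of occupied positions. -/
def wt (M : ℕ) (n : Fin M → Bool) : ℕ := ∑ m : Fin M, if n m then m.1 else 0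

lemma sum_update_aux {M : ℕ} (G : Fin M → Bool → ℕ) (f : Fin M → Bool) (a : Fin M) (v : Bool) :
    (∑ m, G m (Function.update f a v m)) + G a (f a)
      = (∑ m, G m (f m)) + G a v := by
  classical
  rw [← Finset.add_sum_erase _ (fun m => G m (Function.update f a v m)) (Finset.mem_univ a),
      ← Finset.add_sum_erase _ (fun m => G m (f m)) (Finset.mem_univ a)]
  rw [Finset.sum_congr rfl (fun m hm => by
    rw [Function.update_of_ne (Finset.ne_of_mem_erase hm)])]
  simp only [Function.update_self]
  ring

lemma wt_update {M : ℕ} (f : Fin M → Bool) (a : Fin M) (v : Bool) :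
    wt M (Function.update f a v) + (if f a then a.1 else 0)
      = wt M f + (if v then a.1 else 0) :=
  sum_update_aux (fun m b => if b then m.1 else 0) f a v

lemma nOcc_update {M : ℕ} (f : Fin M → Bool) (a : Fin M) (v : Bool) :
    nOcc M (Function.update f a v) + (if f a then 1 else 0)
      = nOcc M f + (if v then 1 else 0) := by
  rw [nOcc, nOcc, Finset.card_filter, Finset.card_filter]
  exact sum_update_aux (fun _ b => if b = true then 1 else 0) f a v

lemma hop_facts {M : ℕ} (n : Fin M → Bool) {a b : Fin M} (ha : n a = true) (hb : n b = false) :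
    nOcc M (hop M n a b) = nOcc M n ∧ wt M (hop M n a b) + a.1 = wt M n + b.1 := by
  have hab : b ≠ a := fun h => by rw [h, ha] at hb; exact Bool.noConfusion hb
  have h1 : Function.update n a false b = false := by
    rw [Function.update_of_ne hab]; exact hb
  constructor
  · have e1 := nOcc_update n a false
    have e2 := nOcc_update (Function.update n a false) b true
    rw [ha] at e1; rw [h1] at e2
    norm_num at e1 e2
    rw [hop]; omega
  · have e1 := wt_update n a false
    have e2 := wt_update (Function.update n a false) b true
    rw [ha] at e1; rw [h1] at e2
    norm_num at e1 e2
    rw [hop]; omega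

/-! ### The signed count `Dsum` and its evaluation -/

lemma nOcc_snoc {M : ℕ} (g : Fin M → Bool) (x : Bool) :
    nOcc (M+1) (Fin.snoc g x) = nOcc M g + (if x then 1 else 0) := by
  rw [nOcc, nOcc, Finset.card_filter, Finset.card_filter, Fin.sum_univ_castSucc]
  simp [Fin.snoc_castSucc, Fin.snoc_last]

lemma wt_snoc {M : ℕ} (g : Fin M → Bool) (x : Bool) :
    wt (M+1) (Fin.snoc g x) = wt M g + (if x then M else 0) := by
  rw [wt, wt, Fin.sum_univ_castSucc]
  simp [Fin.snoc_castSucc, Fin.snoc_last, Fin.val_last]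

lemma sum_pi_bool_succ {M : ℕ} (F : (Fin (M+1) → Bool) → ℤ) :
    ∑ n, F n = ∑ g : Fin M → Bool, (F (Fin.snoc g false) + F (Fin.snoc g true)) := by
  have h := Fintype.sum_equiv (Fin.snocEquiv (fun _ : Fin (M+1) => Bool))
    (fun p => F (Fin.snoc p.2 p.1)) F (fun p => rfl)
  rw [← h, Fintype.sum_prod_type_right]
  congr 1; ext g
  simp [Fintype.sum_bool]
  ring

/-- The signed count of `Q`-particle configurations. -/
def Dsum (M Q : ℕ) : ℤ := ∑ n : Fin M → Bool, if nOcc M n = Q then (-1)^(wt M n) else 0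

lemma inner_eval (K w M Q : ℕ) :
    ((if K = Q then (-1:ℤ)^w else 0) + (if K + 1 = Q then (-1:ℤ)^(w+(M+1)) else 0))
      + ((if K + 1 = Q then (-1:ℤ)^(w+M) else 0)
          + (if K + 1 + 1 = Q then (-1:ℤ)^(w+M+(M+1)) else 0))
    = (if K = Q then (-1:ℤ)^w else 0) - (if K + 2 = Q then (-1:ℤ)^w else 0) := by
  have h1 : (-1:ℤ)^(w+(M+1)) + (-1:ℤ)^(w+M) = 0 := by
    rw [show w+(M+1) = (w+M)+1 by ring, pow_succ]; ring
  have h2 : (-1:ℤ)^(w+M+(M+1)) = -(-1:ℤ)^w := by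
    rw [show w+M+(M+1) = (w+1)+2*M by ring, pow_add, pow_mul]
    norm_num [pow_succ]
  have h3 : K + 1 + 1 = K + 2 := by ring
  rw [h3]
  split_ifs <;> first | (exfalso; omega) | linarith [h1, h2]

lemma Dsum_rec (M Q : ℕ) : Dsum (M+2) Q
    = Dsum M Q - ∑ g : Fin M → Bool, (if nOcc M g + 2 = Q then (-1:ℤ)^(wt M g) else 0) := by
  rw [Dsum,
    sum_pi_bool_succ (fun n => if nOcc (M+2) n = Q then (-1:ℤ)^(wt (M+2) n) else 0),
    sum_pi_bool_succ (fun g =>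
      (if nOcc (M+2) (Fin.snoc g false) = Q then (-1:ℤ)^(wt (M+2) (Fin.snoc g false)) else 0)
      + (if nOcc (M+2) (Fin.snoc g true) = Q then (-1:ℤ)^(wt (M+2) (Fin.snoc g true)) else 0)),
    Dsum, ← Finset.sum_sub_distrib]
  apply Finset.sum_congr rfl
  intro g _
  simp only [nOcc_snoc, wt_snoc]
  norm_num
  exact inner_eval (nOcc M g) (wt M g) M Q

lemma Dsum_zero_q (M Q : ℕ) (h : Q = 0 ∨ Q = 1) : Dsum (M+2) Q = Dsum M Q := by
  rw [Dsum_rec]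
  have hz : ∑ g : Fin M → Bool, (if nOcc M g + 2 = Q then (-1:ℤ)^(wt M g) else 0) = 0 := by
    apply Finset.sum_eq_zero; intro g _; rw [if_neg (by omega)]
  rw [hz, sub_zero]

lemma Dsum_rec2 (M Q : ℕ) : Dsum (M+2) (Q+2) = Dsum M (Q+2) - Dsum M Q := by
  rw [Dsum_rec]
  congr 1
  apply Finset.sum_congr rfl; intro g _
  congr 1
  exact propext (by omega)

lemma Dsum_eq_formula : ∀ M Q : ℕ, Dsum M Q =
    if M % 2 = 0 ∧ Q % 2 = 1 then 0 else (-1:ℤ)^(Q/2) * (Nat.choose (M/2) (Q/2) : ℤ) := by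
  intro M
  induction M using Nat.strong_induction_on with
  | _ M ih =>
    match M with
    | 0 =>
      intro Q
      have hL : Dsum 0 Q = if 0 = Q then 1 else 0 := by
        rw [Dsum, Fintype.sum_unique]
        simp [nOcc, wt]
      rw [hL]
      by_cases hQ : Q = 0
      · subst hQ; norm_num
      · rw [if_neg (by omega)]
        by_cases hodd : Q % 2 = 1
        · rw [if_pos ⟨by norm_num, hodd⟩]
        · rw [if_neg (by tauto), Nat.choose_eq_zero_of_lt (by omega)]
          norm_num
    | 1 =>
      intro Q
      have hn0 : ∀ g : Fin 0 → Bool, nOcc 0 g = 0 := by decide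
      have hw0 : ∀ g : Fin 0 → Bool, wt 0 g = 0 := by decide
      have hL : Dsum 1 Q = (if 0 = Q then 1 else 0) + (if 1 = Q then 1 else 0) := by
        rw [Dsum, sum_pi_bool_succ (fun n => if nOcc 1 n = Q then (-1:ℤ)^(wt 1 n) else 0),
          Fintype.sum_unique, nOcc_snoc, nOcc_snoc, wt_snoc, wt_snoc, hn0 _, hw0 _]
        norm_num
      rcases Q with _ | _ | Q
      · rw [hL]; norm_num
      · rw [hL]; norm_num
      · rw [hL, if_neg (show ¬(0 = Q + 2) by omega), if_neg (show ¬(1 = Q + 2) by omega),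
          if_neg (show ¬(1 % 2 = 0 ∧ (Q+2) % 2 = 1) by omega),
          Nat.choose_eq_zero_of_lt (show 1/2 < (Q+2)/2 by omega)]
        norm_num
    | (M+2) =>
      intro Q
      have ihM := ih M (by omega)
      have e1 : (M+2) % 2 = M % 2 := by omega
      have e2 : (M+2) / 2 = M / 2 + 1 := by omega
      match Q with
      | 0 => rw [Dsum_zero_q M 0 (Or.inl rfl), ihM 0, e1, e2]; norm_num
      | 1 =>
        rw [Dsum_zero_q M 1 (Or.inr rfl), ihM 1, e1]
        by_cases h : M % 2 = 0
        · rw [if_pos (by omega), if_pos (by omega)]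
        · rw [if_neg (by omega), if_neg (by omega), e2]
          norm_num
      | (Q+2) =>
        rw [Dsum_rec2, ihM (Q+2), ihM Q, e1, e2]
        have e3 : (Q+2) % 2 = Q % 2 := by omega
        have e4 : (Q+2) / 2 = Q / 2 + 1 := by omega
        rw [e3, e4]
        by_cases h : M % 2 = 0 ∧ Q % 2 = 1
        · rw [if_pos h, if_pos h, if_pos h]; ring
        · rw [if_neg h, if_neg h, if_neg h, Nat.choose_succ_succ (M/2) (Q/2)]
          push_cast
          ring

lemma Dsum_ne_zero (M Q : ℕ) (hQM : Q ≤ M) (hpar : ¬(M % 2 = 0 ∧ Q % 2 = 1)) :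
    Dsum M Q ≠ 0 := by
  rw [Dsum_eq_formula, if_neg hpar]
  have hc : 0 < Nat.choose (M/2) (Q/2) := Nat.choose_pos (Nat.div_le_div_right hQM)
  exact mul_ne_zero (pow_ne_zero _ (by norm_num)) (by exact_mod_cast hc.ne')

/-! ### Counting configurations by parity -/

/-- Occupation configurations with charge `Q` and weight parity `b`. -/
def Aset (M Q b : ℕ) : Finset (Fin M → Bool) :=
  Finset.univ.filter (fun n => nOcc M n = Q ∧ wt M n % 2 = b)

lemma Dsum_card (M Q : ℕ) :
    Dsum M Q = ((Aset M Q 0).card : ℤ) - ((Aset M Q 1).card : ℤ) := by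
  classical
  rw [Dsum, Aset, Aset, ← Finset.sum_boole, ← Finset.sum_boole, ← Finset.sum_sub_distrib]
  apply Finset.sum_congr rfl
  intro n _
  by_cases h : nOcc M n = Q
  · by_cases he : wt M n % 2 = 0
    · rw [if_pos h, if_pos ⟨h, he⟩, if_neg (by omega),
        Even.neg_one_pow (Nat.even_iff.mpr he)]
      ring
    · rw [if_pos h, if_neg (by tauto), if_pos ⟨h, by omega⟩,
        Odd.neg_one_pow (Nat.odd_iff.mpr (by omega))]
      ring
  · rw [if_neg h, if_neg (by tauto), if_neg (by tauto)]; ring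

lemma card_true_filter (M : ℕ) (hM : 1 ≤ M) (z : Fin M) :
    (Finset.univ.filter (fun s : Fin M → Bool => s z = true)).card = 2^(M-1) := by
  classical
  have htot := Finset.card_filter_add_card_filter_not
    (s := (Finset.univ : Finset (Fin M → Bool))) (p := fun s => s z = true)
  have hcardU : (Finset.univ : Finset (Fin M → Bool)).card = 2^M := by
    simp [Finset.card_univ]
  have heq : (Finset.univ.filter (fun s : Fin M → Bool => s z = true)).card
      = (Finset.univ.filter (fun s : Fin M → Bool => ¬ s z = true)).card := by
    refine Finset.card_bij' (fun s _ => Function.update s z false)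
      (fun s _ => Function.update s z true) ?hi ?hj ?left ?right
    case hi => intro s hs; simp
    case hj => intro s hs; simp
    case left =>
      intro s hs
      have hs' : s z = true := (Finset.mem_filter.mp hs).2
      show Function.update (Function.update s z false) z true = s
      rw [Function.update_idem, ← hs', Function.update_eq_self]
    case right =>
      intro s hs
      have hs' : s z = false := by
        have h2 := (Finset.mem_filter.mp hs).2
        simp at h2; exact h2
      show Function.update (Function.update s z true) z false = s
      rw [Function.update_idem, ← hs', Function.update_eq_self]
  have hpow : 2 ^ M = 2 * 2 ^ (M - 1) := by
    cases M with
    | zero => omega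
    | succ m => rw [pow_succ']; norm_num
  rw [heq] at htot
  rw [hcardU, hpow] at htot
  rw [heq]
  generalize hA : (Finset.univ.filter (fun s : Fin M → Bool => ¬ s z = true)).card = a at htot ⊢
  clear heq hcardU hA
  omega

/-! ### Sector subspaces spanned by basis vectors of fixed parity -/

/-- Configurations with charge `Q`, weight parity `b`, and first spin up. -/
def Bset (M Q b : ℕ) (h0 : 0 < M) : Finset (Cfg M) :=
  Finset.univ.filter (fun p => (nOcc M p.1 = Q ∧ wt M p.1 % 2 = b) ∧ p.2 ⟨0, h0⟩ = true)

lemma card_Bset (M Q b : ℕ) (h0 : 0 < M) :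
    (Bset M Q b h0).card = (Aset M Q b).card * 2^(M-1) := by
  classical
  have hBeq : Bset M Q b h0 = (Aset M Q b) ×ˢ
      (Finset.univ.filter (fun s : Fin M → Bool => s ⟨0, h0⟩ = true)) := by
    ext p
    simp only [Bset, Aset, Finset.mem_product, Finset.mem_filter, Finset.mem_univ, true_and]
  rw [hBeq, Finset.card_product, card_true_filter M h0 ⟨0, h0⟩]

/-- The span of the basis vectors indexed by `Bset`. -/
noncomputable def Wspan (M Q b : ℕ) (h0 : 0 < M) : Submodule ℂ (V M) :=
  Submodule.span ℂ (((Bset M Q b h0).image (e M) : Finset (V M)) : Set (V M))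

lemma finrank_Wspan (M Q b : ℕ) (h0 : 0 < M) :
    Module.finrank ℂ ↥(Wspan M Q b h0) = (Aset M Q b).card * 2^(M-1) := by
  rw [Wspan, finrank_span_image, card_Bset]

lemma Wspan_le_sectorUp (M Q b : ℕ) (h0 : 0 < M) :
    Wspan M Q b h0 ≤ sectorUp M h0 Q := by
  rw [Wspan, Submodule.span_le]
  intro v hv
  rcases Finset.mem_image.mp (Finset.mem_coe.mp hv) with ⟨p, hp, rfl⟩
  obtain ⟨-, ⟨hQ, hw⟩, hs⟩ := Finset.mem_filter.mp hp
  exact Submodule.subset_span ⟨p, hQ, hs, rfl⟩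

lemma e_mem_Wspan {M Q b : ℕ} {h0 : 0 < M} (q : Cfg M)
    (h1 : nOcc M q.1 = Q) (h2 : wt M q.1 % 2 = b) (h3 : q.2 ⟨0, h0⟩ = true) :
    e M q ∈ Wspan M Q b h0 :=
  Submodule.subset_span (Finset.mem_coe.mpr (Finset.mem_image_of_mem _
    (Finset.mem_filter.mpr ⟨Finset.mem_univ _, ⟨h1, h2⟩, h3⟩)))

/-! ### The chiral property: `H` maps parity `b` to parity `1-b` -/

lemma H_maps {M : ℕ} (γ J : Fin (M-1) → ℝ) (h0 : 0 < M) (Q b : ℕ) (hb : b < 2)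
    (p : Cfg M) (hp : p ∈ Bset M Q b h0) :
    (Hgam M γ + HJop M J) (e M p) ∈ Wspan M Q (1-b) h0 := by
  classical
  obtain ⟨-, ⟨hQ, hw⟩, hs⟩ := Finset.mem_filter.mp hp
  rw [LinearMap.add_apply]
  simp only [Hgam, HJop, mkOp_apply]
  refine add_mem (neg_mem (Submodule.sum_mem _ fun m _ =>
      Submodule.smul_mem _ _ (add_mem ?_ ?_)))
    (Submodule.sum_mem _ fun m _ => Submodule.smul_mem _ _ (add_mem ?_ ?_))
  · split_ifs with h
    · obtain ⟨hn, hwq⟩ := hop_facts p.1 h.1 h.2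
      exact e_mem_Wspan _ (hn.trans hQ)
        (by show wt M (hop M p.1 (sL M m) (sR M m)) % 2 = 1 - b
            have hwq' : wt M (hop M p.1 (sL M m) (sR M m)) + m.1
                = wt M p.1 + (m.1 + 1) := by simpa [sL, sR] using hwq
            omega) hs
    · exact zero_mem _
  · split_ifs with h
    · obtain ⟨hn, hwq⟩ := hop_facts p.1 h.1 h.2
      exact e_mem_Wspan _ (hn.trans hQ)
        (by show wt M (hop M p.1 (sR M m) (sL M m)) % 2 = 1 - b
            have hwq' : wt M (hop M p.1 (sR M m) (sL M m)) + (m.1 + 1)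
                = wt M p.1 + m.1 := by simpa [sL, sR] using hwq
            omega) hs
    · exact zero_mem _
  · split_ifs with h
    · obtain ⟨hn, hwq⟩ := hop_facts p.1 h.1 h.2.1
      refine e_mem_Wspan _ (hn.trans hQ)
        (by show wt M (hop M p.1 (sL M m) (sR M m)) % 2 = 1 - b
            have hwq' : wt M (hop M p.1 (sL M m) (sR M m)) + m.1
                = wt M p.1 + (m.1 + 1) := by simpa [sL, sR] using hwq
            omega) ?_
      have hne : (⟨0, h0⟩ : Fin M) ≠ sR M m := by
        intro hcontra
        have : (0 : ℕ) = m.1 + 1 := congrArg Fin.val hcontra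
        omega
      show Function.update p.2 (sR M m) true ⟨0, h0⟩ = true
      rw [Function.update_of_ne hne]; exact hs
    · exact zero_mem _
  · split_ifs with h
    · obtain ⟨hn, hwq⟩ := hop_facts p.1 h.1 h.2.1
      refine e_mem_Wspan _ (hn.trans hQ)
        (by show wt M (hop M p.1 (sR M m) (sL M m)) % 2 = 1 - b
            have hwq' : wt M (hop M p.1 (sR M m) (sL M m)) + (m.1 + 1)
                = wt M p.1 + m.1 := by simpa [sL, sR] using hwq
            omega) ?_
      have hne : (⟨0, h0⟩ : Fin M) ≠ sR M m := by
        intro hcontra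
        have : (0 : ℕ) = m.1 + 1 := congrArg Fin.val hcontra
        omega
      show Function.update p.2 (sR M m) false ⟨0, h0⟩ = true
      rw [Function.update_of_ne hne]; exact hs
    · exact zero_mem _

end ZMAux

open ZMAux

/-- for `1 ≤ Q ≤ M` with `M` odd or `Q` even (excluding only even
`M` with odd `Q`), and nonvanishing hoppings `γ_m ≠ 0` (`J` arbitrary), the
kernel of `H_γ + H_J` restricted to `W_Q^↑` has dimension at least `2^{M−1}`:
every such charge sector possesses at least `2^{M−1}` exact zero modes. -/
theorem zero_modes_general_Q (M Q : ℕ) (hM : 2 ≤ M) (hQ1 : 1 ≤ Q) (hQM : Q ≤ M)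
    (hpar : Odd M ∨ Even Q)
    (γ J : Fin (M - 1) → ℝ) (hγ : ∀ m, γ m ≠ 0) :
    2 ^ (M - 1) ≤ Module.finrank ℂ
      ↥(sectorUp M (by omega) Q ⊓ LinearMap.ker (Hgam M γ + HJop M J)) := by
  classical
  have h0 : 0 < M := by omega
  set H := Hgam M γ + HJop M J with hH
  -- parity hypothesis in arithmetic form
  have hpar' : ¬(M % 2 = 0 ∧ Q % 2 = 1) := by
    rcases hpar with h | h
    · rw [Nat.odd_iff] at h; omega
    · rw [Nat.even_iff] at h; omega
  -- the two parity classes have different sizes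
  have hne : (Aset M Q 0).card ≠ (Aset M Q 1).card := by
    intro h
    apply Dsum_ne_zero M Q hQM hpar'
    rw [Dsum_card, h, sub_self]
  obtain ⟨b, hb2, hgt⟩ :
      ∃ b, b < 2 ∧ (Aset M Q (1-b)).card + 1 ≤ (Aset M Q b).card := by
    rcases Nat.lt_or_ge (Aset M Q 0).card (Aset M Q 1).card with h | h
    · exact ⟨1, by omega, by simpa using h⟩
    · exact ⟨0, by omega, by simp; omega⟩
  -- the restriction of H to the parity-b subspace
  have hmapsub : Submodule.map H (Wspan M Q b h0) ≤ Wspan M Q (1-b) h0 := by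
    rw [Wspan, Submodule.map_span, Submodule.span_le]
    rintro _ ⟨v, hv, rfl⟩
    rcases Finset.mem_image.mp (Finset.mem_coe.mp hv) with ⟨p, hp, rfl⟩
    exact SetLike.mem_coe.mpr (H_maps γ J h0 Q b hb2 p hp)
  let f : ↥(Wspan M Q b h0) →ₗ[ℂ] V M := H.comp (Wspan M Q b h0).subtype
  have hrange : LinearMap.range f ≤ Wspan M Q (1-b) h0 := by
    rintro v ⟨x, rfl⟩
    exact hmapsub ⟨(x : V M), x.2, rfl⟩
  have hrn := LinearMap.finrank_range_add_finrank_ker f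
  have hfWb : Module.finrank ℂ ↥(Wspan M Q b h0) = (Aset M Q b).card * 2^(M-1) :=
    finrank_Wspan M Q b h0
  have hfWb' : Module.finrank ℂ ↥(Wspan M Q (1-b) h0) = (Aset M Q (1-b)).card * 2^(M-1) :=
    finrank_Wspan M Q (1-b) h0
  have hrle : Module.finrank ℂ ↥(LinearMap.range f) ≤ Module.finrank ℂ ↥(Wspan M Q (1-b) h0) :=
    Submodule.finrank_mono hrange
  -- inject the kernel of f into the target submodule
  have hKmem : ∀ x : ↥(LinearMap.ker f),
      ((x : ↥(Wspan M Q b h0)) : V M) ∈ sectorUp M h0 Q ⊓ LinearMap.ker H := by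
    intro x
    refine ⟨Wspan_le_sectorUp M Q b h0 (x : ↥(Wspan M Q b h0)).2, ?_⟩
    have hx : f (x : ↥(Wspan M Q b h0)) = 0 := LinearMap.mem_ker.mp x.2
    exact LinearMap.mem_ker.mpr hx
  let φ : ↥(LinearMap.ker f) →ₗ[ℂ] ↥(sectorUp M h0 Q ⊓ LinearMap.ker H) :=
    LinearMap.codRestrict _ ((Wspan M Q b h0).subtype.comp (LinearMap.ker f).subtype) hKmem
  have hinj : Function.Injective φ := by
    intro x y hxy
    have h1 := congrArg Subtype.val hxy
    exact Subtype.ext (Subtype.ext h1)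
  have hKer_le : Module.finrank ℂ ↥(LinearMap.ker f)
      ≤ Module.finrank ℂ ↥(sectorUp M h0 Q ⊓ LinearMap.ker H) :=
    LinearMap.finrank_le_finrank_of_injective hinj
  have hmul : (Aset M Q (1-b)).card * 2^(M-1) + 2^(M-1) ≤ (Aset M Q b).card * 2^(M-1) := by
    calc (Aset M Q (1-b)).card * 2^(M-1) + 2^(M-1)
        = ((Aset M Q (1-b)).card + 1) * 2^(M-1) := by ring
      _ ≤ (Aset M Q b).card * 2^(M-1) := Nat.mul_le_mul_right _ hgt
  show 2 ^ (M - 1) ≤ Module.finrank ℂ ↥(sectorUp M h0 Q ⊓ LinearMap.ker H)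
  have final : ∀ (r k wb wb' Kv xS yS S : ℕ), r + k = wb → wb = xS → wb' = yS →
      r ≤ wb' → k ≤ Kv → yS + S ≤ xS → S ≤ Kv := by
    intros; omega
  exact final _ _ _ _ _ _ _ _ hrn hfWb hfWb' hrle hKer_le hmul
end
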